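/- For the slit map s̃ₓ(z) = x + √((z−x)² − 1), there exists an absolute constant C > 0 such that for all z ∈ ℍ, ∫_{−∞}^{∞} |s̃ₓ′(z) − 1| dx < C / Im z. -/

import Mathlib

open Complex MeasureTheory Filter

/-- Complex square root with the branch chosen in the closed upper half-plane. -/
noncomputable def csqrtH (w : ℂ) : ℂ :=
  if 0 ≤ (w ^ (1/2 : ℂ)).im then w ^ (1/2 : ℂ) else -(w ^ (1/2 : ℂ))

/-- The slit map at `x`: `s̃ₓ(z) = x + √((z-x)² - 1)`, branch mapping ℍ into ℍ. -/
noncomputable def slitAt (x : ℝ) (z : ℂ) : ℂ := x + csqrtH ((z - x) ^ 2 - 1)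

/-- The complex derivative of the slit map at `x`: `(z-x)/√((z-x)² - 1)`. -/
noncomputable def slitDerivAt (x : ℝ) (z : ℂ) : ℂ := (z - x) / csqrtH ((z - x) ^ 2 - 1)

/-! ### Auxiliary lemmas -/

lemma csqrtH_sq (v : ℂ) : (csqrtH v) ^ 2 = v := by
  have h : (v ^ (1/2 : ℂ)) ^ (2:ℕ) = v := by
    rw [show (1/2:ℂ) = ((2:ℕ):ℂ)⁻¹ by norm_num]
    exact Complex.cpow_nat_inv_pow v two_ne_zero
  unfold csqrtH
  split_ifs <;> simpa [neg_pow] using h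

lemma csqrtH_im_nonneg (v : ℂ) : 0 ≤ (csqrtH v).im := by
  unfold csqrtH
  split_ifs with h
  · exact h
  · simp only [Complex.neg_im]
    linarith [lt_of_not_ge h]

lemma measurable_csqrtH : Measurable csqrtH := by
  have hp : Measurable fun w : ℂ => w ^ (1/2:ℂ) := measurable_id.pow measurable_const
  unfold csqrtH
  exact Measurable.ite
    (measurableSet_le measurable_const (Complex.measurable_im.comp hp)) hp hp.neg

lemma rpow_neg_half_of_neg {x : ℝ} (hx : x < 0) : x ^ (-(1/2) : ℝ) = 0 := by
  rw [Real.rpow_def_of_neg hx, show (-(1/2) : ℝ) * Real.pi = -(Real.pi/2) by ring,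
    Real.cos_neg, Real.cos_pi_div_two, mul_zero]

lemma rpow_half_of_neg {x : ℝ} (hx : x < 0) : x ^ ((1:ℝ)/2) = 0 := by
  rw [Real.rpow_def_of_neg hx, show ((1:ℝ)/2) * Real.pi = Real.pi/2 by ring,
    Real.cos_pi_div_two, mul_zero]

lemma abs_rpow_neg_half (t : ℝ) :
    |t| ^ (-(1/2):ℝ) = t ^ (-(1/2):ℝ) + (-t) ^ (-(1/2):ℝ) := by
  rcases lt_trichotomy t 0 with h | h | h
  · rw [abs_of_neg h, rpow_neg_half_of_neg h, zero_add]
  · subst h; norm_num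
  · rw [abs_of_pos h, rpow_neg_half_of_neg (by linarith : -t < 0), add_zero]

lemma rpow_half_three_le : (3:ℝ) ^ ((1:ℝ)/2) ≤ 7/4 := by
  rw [← Real.sqrt_eq_rpow]
  nlinarith [Real.sq_sqrt (by norm_num : (3:ℝ) ≥ 0), Real.sqrt_nonneg 3]

lemma intervalIntegrable_abs_rpow :
    IntervalIntegrable (fun t : ℝ => |t| ^ (-(1/2):ℝ)) MeasureTheory.volume (-3) 3 := by
  have i1 : IntervalIntegrable (fun t : ℝ => t ^ (-(1/2):ℝ)) MeasureTheory.volume (-3) 3 :=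
    intervalIntegral.intervalIntegrable_rpow' (by norm_num)
  have i2 : IntervalIntegrable (fun t : ℝ => (-t) ^ (-(1/2):ℝ)) MeasureTheory.volume (-3) 3 := by
    have := (intervalIntegral.intervalIntegrable_rpow' (a := -3) (b := 3) (r := -(1/2)) (by norm_num))
    have h := (IntervalIntegrable.iff_comp_neg (f := fun x : ℝ => x ^ (-(1/2):ℝ)) (by simp)).mp this
    simpa using h.symm
  have : (fun t : ℝ => |t| ^ (-(1/2):ℝ))
      = fun t => t ^ (-(1/2):ℝ) + (-t) ^ (-(1/2):ℝ) := funext abs_rpow_neg_half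
  rw [this]; exact i1.add i2

lemma integral_abs_rpow_le :
    ∫ t in Set.Icc (-3:ℝ) 3, |t| ^ (-(1/2):ℝ) ≤ 7 := by
  rw [MeasureTheory.integral_Icc_eq_integral_Ioc,
    ← intervalIntegral.integral_of_le (by norm_num : (-3:ℝ) ≤ 3)]
  have i1 : IntervalIntegrable (fun t : ℝ => t ^ (-(1/2):ℝ)) MeasureTheory.volume (-3) 3 :=
    intervalIntegral.intervalIntegrable_rpow' (by norm_num)
  have i2 : IntervalIntegrable (fun t : ℝ => (-t) ^ (-(1/2):ℝ)) MeasureTheory.volume (-3) 3 := by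
    have := (intervalIntegral.intervalIntegrable_rpow' (a := -3) (b := 3) (r := -(1/2)) (by norm_num))
    have h := (IntervalIntegrable.iff_comp_neg (f := fun x : ℝ => x ^ (-(1/2):ℝ)) (by simp)).mp this
    simpa using h.symm
  have hval : ∫ t in (-3:ℝ)..3, t ^ (-(1/2):ℝ) = 2 * 3 ^ ((1:ℝ)/2) := by
    rw [integral_rpow (Or.inl (by norm_num))]
    rw [show (-(1/2):ℝ) + 1 = (1:ℝ)/2 by norm_num, rpow_half_of_neg (by norm_num : (-3:ℝ) < 0)]
    ring
  have hval2 : ∫ t in (-3:ℝ)..3, (-t) ^ (-(1/2):ℝ) = 2 * 3 ^ ((1:ℝ)/2) := by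
    rw [show ((-3:ℝ)) = -(3:ℝ) by norm_num] at *
    rw [intervalIntegral.integral_comp_neg (fun t : ℝ => t ^ (-(1/2):ℝ))]
    simpa using hval
  have : (fun t : ℝ => |t| ^ (-(1/2):ℝ))
      = fun t => t ^ (-(1/2):ℝ) + (-t) ^ (-(1/2):ℝ) := funext abs_rpow_neg_half
  rw [this, intervalIntegral.integral_add i1 i2, hval, hval2]
  linarith [rpow_half_three_le]

/-- The singular part of the majorant. -/
noncomputable def singKer (b : ℝ) : ℝ → ℝ :=
  (Set.Icc (b-3) (b+3)).indicator (fun t => |t - b| ^ (-(1/2):ℝ))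

lemma singKer_eq (b : ℝ) :
    singKer b = fun x => singKer 0 (x - b) := by
  funext x
  unfold singKer
  by_cases h : x ∈ Set.Icc (b-3) (b+3)
  · have h' : x - b ∈ Set.Icc (0-3 : ℝ) (0+3) := by
      simp only [Set.mem_Icc] at h ⊢; constructor <;> linarith [h.1, h.2]
    rw [Set.indicator_of_mem h, Set.indicator_of_mem h']
    norm_num
  · have h' : x - b ∉ Set.Icc (0-3 : ℝ) (0+3) := by
      simp only [Set.mem_Icc] at h ⊢
      intro hc; exact h ⟨by linarith [hc.1], by linarith [hc.2]⟩
    rw [Set.indicator_of_notMem h, Set.indicator_of_notMem h']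

lemma singKer_nonneg (b : ℝ) (x : ℝ) : 0 ≤ singKer b x := by
  unfold singKer
  exact Set.indicator_nonneg (fun t _ => Real.rpow_nonneg (abs_nonneg _) _) x

lemma singKer_zero_integrable : Integrable (singKer 0) := by
  have h0 : IntegrableOn (fun t : ℝ => |t - 0| ^ (-(1/2):ℝ)) (Set.Icc (0-3:ℝ) (0+3)) := by
    have := (intervalIntegrable_iff_integrableOn_Icc_of_le (by norm_num : (-3:ℝ) ≤ 3)).mp
      intervalIntegrable_abs_rpow
    simpa using this
  rw [show singKer 0 = (Set.Icc (0-3:ℝ) (0+3)).indicator (fun t => |t - 0| ^ (-(1/2):ℝ)) from rfl]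
  exact h0.integrable_indicator measurableSet_Icc

lemma singKer_integrable (b : ℝ) : Integrable (singKer b) := by
  rw [singKer_eq b]
  exact singKer_zero_integrable.comp_sub_right b

lemma singKer_integral_le (b : ℝ) : ∫ x, singKer b x ≤ 7 := by
  rw [singKer_eq b]
  rw [integral_sub_right_eq_self (singKer 0) b]
  unfold singKer
  rw [MeasureTheory.integral_indicator measurableSet_Icc]
  calc ∫ x in Set.Icc (0-3:ℝ) (0+3), |x - 0| ^ (-(1/2):ℝ)
      = ∫ x in Set.Icc (-3:ℝ) 3, |x| ^ (-(1/2):ℝ) := by norm_num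
    _ ≤ 7 := integral_abs_rpow_le

lemma cauchyKer_integrable {a y : ℝ} (hy : 0 < y) :
    Integrable (fun x : ℝ => 2 / ((x - a)^2 + y^2)) ∧
    ∫ x : ℝ, 2 / ((x - a)^2 + y^2) = 2 * Real.pi / y := by
  set f : ℝ → ℝ := fun t => 2 / y^2 * (1 + t^2)⁻¹ with hf
  have hfint : Integrable f := integrable_inv_one_add_sq.const_mul _
  have hy' : y ≠ 0 := hy.ne'
  have hcomp : (fun x : ℝ => 2 / ((x - a)^2 + y^2)) = fun x => f ((x - a) * y⁻¹) := by
    funext x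
    have h2 : (x-a)^2 + y^2 > 0 := by positivity
    simp only [hf]
    field_simp
    ring
  have hg : Integrable (fun t : ℝ => f (t * y⁻¹)) :=
    (MeasureTheory.integrable_comp_mul_right_iff f (inv_ne_zero hy')).mpr hfint
  constructor
  · rw [hcomp]
    exact hg.comp_sub_right a
  · rw [hcomp]
    rw [integral_sub_right_eq_self (fun t => f (t * y⁻¹)) a]
    rw [MeasureTheory.Measure.integral_comp_inv_mul_right f y]
    have hint : ∫ t : ℝ, f t = 2 / y^2 * Real.pi := by
      rw [hf, MeasureTheory.integral_const_mul, integral_univ_inv_one_add_sq]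
    rw [hint, abs_of_pos hy, smul_eq_mul]
    field_simp

lemma rpow_neg_half_eq {t : ℝ} (ht : 0 ≤ t) : t ^ (-(1/2):ℝ) = (Real.sqrt t)⁻¹ := by
  rw [Real.rpow_neg ht, Real.sqrt_eq_rpow]

lemma norm_sq_eq (ζ : ℂ) : ‖ζ‖^2 = ζ.re^2 + ζ.im^2 := by
  rw [Complex.sq_norm, Complex.normSq_apply]; ring

set_option maxHeartbeats 1000000 in
lemma slit_pointwise_bound (z : ℂ) (hz : 0 < z.im) (x : ℝ)
    (h1 : x ≠ z.re - 1) (h2 : x ≠ z.re + 1) :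
    ‖slitDerivAt x z - 1‖ ≤ 2 / ((x - z.re)^2 + z.im^2)
      + z.im⁻¹ * (singKer (z.re - 1) x + singKer (z.re + 1) x) := by
  set w : ℂ := z - (x:ℂ) with hw
  set S : ℂ := csqrtH (w^2 - 1) with hS
  have hwim : w.im = z.im := by simp [hw]
  have hwre : w.re = z.re - x := by simp [hw]
  have hS2 : S^2 = w^2 - 1 := csqrtH_sq _
  have hSim0 : 0 ≤ S.im := csqrtH_im_nonneg _
  have him_sq : ∀ ζ : ℂ, (ζ^2).im = 2 * (ζ.re * ζ.im) := by
    intro ζ; rw [sq, Complex.mul_im]; ring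
  have hre_sq : ∀ ζ : ℂ, (ζ^2).re = ζ.re^2 - ζ.im^2 := by
    intro ζ; rw [sq, Complex.mul_re]; ring
  have hReIm : S.re * S.im = w.re * w.im := by
    have h := congrArg Complex.im hS2
    rw [him_sq S] at h
    simp only [Complex.sub_im, Complex.one_im, him_sq] at h
    linarith
  have hSim : 0 < S.im := by
    rcases hSim0.lt_or_eq with h | h
    · exact h
    · exfalso
      have h' : S.im = 0 := h.symm
      have hre : (S^2).re = S.re^2 := by rw [hre_sq, h']; ring
      have him : w.re * w.im = 0 := by rw [← hReIm, h', mul_zero]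
      have hwre0 : w.re = 0 := by
        rcases mul_eq_zero.mp him with h'' | h''
        · exact h''
        · exact absurd h'' (by rw [hwim]; exact hz.ne')
      have : (w^2 - 1).re = -(z.im^2) - 1 := by
        simp only [Complex.sub_re, Complex.one_re, hre_sq, hwre0, hwim]; ring
      have h3 : S.re^2 = -(z.im^2) - 1 := by
        rw [← hre, hS2, this]
      nlinarith [sq_nonneg S.re, sq_nonneg z.im]
  have hSne : S ≠ 0 := by
    intro h; rw [h] at hSim; simp at hSim
  have hwSne : w + S ≠ 0 := by
    intro h
    have : (w + S).im = 0 := by rw [h]; simp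
    rw [Complex.add_im, hwim] at this
    linarith
  have hder : slitDerivAt x z - 1 = (w - S)/S := by
    rw [slitDerivAt, ← hw, ← hS]
    field_simp
  have hprod : (w - S) * (w + S) = 1 := by linear_combination -hS2
  have hkey : ‖w - S‖ * ‖w + S‖ = 1 := by
    rw [← norm_mul, hprod, norm_one]
  have hWnm : ‖w - S‖ = ‖w + S‖⁻¹ := eq_inv_of_mul_eq_one_left hkey
  have key2 : w.re * S.re * S.im = w.re^2 * z.im := by
    rw [mul_assoc, hReIm, hwim]; ring
  have hur : 0 ≤ w.re * S.re := by
    nlinarith [key2, mul_nonneg (sq_nonneg w.re) hz.le, hSim]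
  have hyS : 0 ≤ z.im * S.im := mul_nonneg hz.le hSim.le
  have hWS : ‖w‖ ≤ ‖w + S‖ := by
    apply (pow_le_pow_iff_left₀ (norm_nonneg _) (norm_nonneg _) two_ne_zero).mp
    rw [norm_sq_eq, norm_sq_eq, Complex.add_re, Complex.add_im, hwim]
    nlinarith [sq_nonneg S.re, sq_nonneg S.im, hur, hyS, hwim]
  have hwpos : 0 < ‖w‖ := by
    have := Complex.abs_im_le_norm w
    rw [hwim] at this
    have := le_abs_self z.im
    calc (0:ℝ) < z.im := hz
      _ ≤ |z.im| := le_abs_self _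
      _ ≤ ‖w‖ := by
          have h := Complex.abs_im_le_norm w
          rw [hwim] at *
          exact h
  have hSpos : 0 < ‖S‖ := norm_pos_iff.mpr hSne
  have main : ‖slitDerivAt x z - 1‖ ≤ (‖w‖ * ‖S‖)⁻¹ := by
    rw [hder, norm_div, hWnm]
    rw [div_eq_mul_inv, ← mul_inv]
    apply inv_anti₀ (by positivity)
    exact mul_le_mul_of_nonneg_right hWS (norm_nonneg _)
  have hvS : ‖S‖^2 = ‖w^2 - 1‖ := by rw [← hS2, norm_pow]
  have hnw2 : ‖w‖^2 = (x - z.re)^2 + z.im^2 := by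
    rw [norm_sq_eq, hwre, hwim]; ring
  have hsing_nonneg : 0 ≤ z.im⁻¹ * (singKer (z.re - 1) x + singKer (z.re + 1) x) := by
    have := singKer_nonneg (z.re - 1) x
    have := singKer_nonneg (z.re + 1) x
    positivity
  by_cases hcase : 4 ≤ (x - z.re)^2 + z.im^2
  · -- far region
    have hv_lb : ‖w‖^2 - 1 ≤ ‖S‖^2 := by
      rw [hvS]
      calc ‖w‖^2 - 1 = ‖w^2‖ - ‖(1:ℂ)‖ := by rw [norm_pow, norm_one]
        _ ≤ ‖w^2 - 1‖ := norm_sub_norm_le _ _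
    have hS_lb : ‖w‖/2 ≤ ‖S‖ := by
      apply (pow_le_pow_iff_left₀ (by positivity) (norm_nonneg _) two_ne_zero).mp
      rw [div_pow]
      nlinarith [hv_lb, hnw2, hcase]
    have : (‖w‖ * ‖S‖)⁻¹ ≤ 2 / ((x - z.re)^2 + z.im^2) := by
      rw [← hnw2]
      have h1' : ‖w‖^2/2 ≤ ‖w‖ * ‖S‖ := by nlinarith [hS_lb, hwpos]
      have h2' : (‖w‖ * ‖S‖)⁻¹ ≤ (‖w‖^2/2)⁻¹ := by
        apply inv_anti₀ (by positivity) h1'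
      calc (‖w‖ * ‖S‖)⁻¹ ≤ (‖w‖^2/2)⁻¹ := h2'
        _ = 2 / ‖w‖^2 := by field_simp
    linarith [main, this, hsing_nonneg]
  · -- near region
    push_neg at hcase
    have hb : (x - z.re)^2 < 4 := by linarith [sq_nonneg z.im]
    have hxlt : z.re - 2 < x ∧ x < z.re + 2 := by
      constructor <;> nlinarith [hb]
    have hfac : ‖w^2 - 1‖ = ‖w - 1‖ * ‖w + 1‖ := by
      rw [show w^2 - 1 = (w - 1) * (w + 1) by ring, norm_mul]
    have hre1 : |w.re - 1| ≤ ‖w - 1‖ := by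
      have h := Complex.abs_re_le_norm (w - 1)
      simpa using h
    have hre2 : |w.re + 1| ≤ ‖w + 1‖ := by
      have h := Complex.abs_re_le_norm (w + 1)
      simpa using h
    have hu1 : |w.re - 1| = |x - (z.re - 1)| := by
      rw [hwre, show z.re - x - 1 = -(x - (z.re - 1)) by ring, abs_neg]
    have hu2 : |w.re + 1| = |x - (z.re + 1)| := by
      rw [hwre, show z.re - x + 1 = -(x - (z.re + 1)) by ring, abs_neg]
    have hu1pos : 0 < |x - (z.re - 1)| := abs_pos.mpr (sub_ne_zero.mpr h1)
    have hu2pos : 0 < |x - (z.re + 1)| := abs_pos.mpr (sub_ne_zero.mpr h2)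
    have finish : ∀ b : ℝ, 0 < |x - b| → |x - b| ≤ ‖S‖^2 →
        ‖slitDerivAt x z - 1‖ ≤ z.im⁻¹ * |x - b| ^ (-(1/2):ℝ) := by
      intro b hpos hle
      have hsq : Real.sqrt |x - b| ≤ ‖S‖ := by
        have := Real.sqrt_le_sqrt hle
        rwa [Real.sqrt_sq (norm_nonneg _)] at this
      have hy_le : z.im ≤ ‖w‖ := by
        have h := Complex.abs_im_le_norm w
        rw [hwim] at *
        calc z.im ≤ |z.im| := le_abs_self _
          _ ≤ ‖w‖ := h
      have hsqpos : 0 < Real.sqrt |x - b| := Real.sqrt_pos.mpr hpos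
      have hmul : z.im * Real.sqrt |x - b| ≤ ‖w‖ * ‖S‖ :=
        mul_le_mul hy_le hsq hsqpos.le (norm_nonneg _)
      calc ‖slitDerivAt x z - 1‖ ≤ (‖w‖ * ‖S‖)⁻¹ := main
        _ ≤ (z.im * Real.sqrt |x - b|)⁻¹ := by
            apply inv_anti₀ (by positivity) hmul
        _ = z.im⁻¹ * |x - b| ^ (-(1/2):ℝ) := by
            rw [rpow_neg_half_eq (abs_nonneg _), mul_inv]
    by_cases hc : 1 ≤ |w.re + 1|
    · -- singular near z.re - 1
      have hle : |x - (z.re - 1)| ≤ ‖S‖^2 := by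
        rw [hvS, hfac, ← hu1]
        calc |w.re - 1| = |w.re - 1| * 1 := (mul_one _).symm
          _ ≤ ‖w - 1‖ * ‖w + 1‖ :=
              mul_le_mul hre1 (le_trans hc hre2) zero_le_one (norm_nonneg _)
      have hker : singKer (z.re - 1) x = |x - (z.re - 1)| ^ (-(1/2):ℝ) := by
        rw [singKer, Set.indicator_of_mem]
        simp only [Set.mem_Icc]
        constructor <;> linarith [hxlt.1, hxlt.2]
      have := finish (z.re - 1) hu1pos hle
      have hker2 : 0 ≤ singKer (z.re + 1) x := singKer_nonneg _ _
      have hG1 : 0 ≤ 2 / ((x - z.re)^2 + z.im^2) := by positivity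
      rw [← hker] at this
      have : ‖slitDerivAt x z - 1‖ ≤
          z.im⁻¹ * (singKer (z.re - 1) x + singKer (z.re + 1) x) := by
        calc ‖slitDerivAt x z - 1‖ ≤ z.im⁻¹ * singKer (z.re - 1) x := this
          _ ≤ z.im⁻¹ * (singKer (z.re - 1) x + singKer (z.re + 1) x) := by
              apply mul_le_mul_of_nonneg_left _ (by positivity)
              linarith
      linarith
    · -- singular near z.re + 1
      push_neg at hc
      have habs := abs_lt.mp hc
      have hge : 1 ≤ |w.re - 1| := by
        rw [abs_of_neg (by linarith : w.re - 1 < 0)]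
        linarith
      have hle : |x - (z.re + 1)| ≤ ‖S‖^2 := by
        rw [hvS, hfac, ← hu2]
        calc |w.re + 1| = 1 * |w.re + 1| := (one_mul _).symm
          _ ≤ ‖w - 1‖ * ‖w + 1‖ :=
              mul_le_mul (le_trans hge hre1) hre2 (abs_nonneg _) (norm_nonneg _)
      have hker : singKer (z.re + 1) x = |x - (z.re + 1)| ^ (-(1/2):ℝ) := by
        rw [singKer, Set.indicator_of_mem]
        simp only [Set.mem_Icc]
        constructor <;> linarith [hxlt.1, hxlt.2]
      have := finish (z.re + 1) hu2pos hle
      rw [← hker] at this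
      have hker2 : 0 ≤ singKer (z.re - 1) x := singKer_nonneg _ _
      have hG1 : 0 ≤ 2 / ((x - z.re)^2 + z.im^2) := by positivity
      have : ‖slitDerivAt x z - 1‖ ≤
          z.im⁻¹ * (singKer (z.re - 1) x + singKer (z.re + 1) x) := by
        calc ‖slitDerivAt x z - 1‖ ≤ z.im⁻¹ * singKer (z.re + 1) x := this
          _ ≤ z.im⁻¹ * (singKer (z.re - 1) x + singKer (z.re + 1) x) := by
              apply mul_le_mul_of_nonneg_left _ (by positivity)
              linarith
      linarith

lemma ae_ne_const (c : ℝ) : ∀ᵐ x : ℝ, x ≠ c := by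
  have h : {x : ℝ | ¬ x ≠ c} = {c} := by ext t; simp
  rw [MeasureTheory.ae_iff, h]
  exact measure_singleton c

/-- `∫ℝ |s̃ₓ'(z) - 1| dx < C / Im z` uniformly over `z ∈ ℍ`. -/
theorem stmt_1 :
    ∃ C > (0:ℝ), ∀ z : ℂ, 0 < z.im →
      Integrable (fun x : ℝ => ‖slitDerivAt x z - 1‖) ∧
      (∫ x : ℝ, ‖slitDerivAt x z - 1‖) < C / z.im := by
  refine ⟨21, by norm_num, fun z hz => ?_⟩
  have hy : 0 < z.im := hz
  set G : ℝ → ℝ := fun x => 2 / ((x - z.re)^2 + z.im^2)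
      + z.im⁻¹ * (singKer (z.re - 1) x + singKer (z.re + 1) x) with hG
  obtain ⟨hc_int, hc_val⟩ := cauchyKer_integrable (a := z.re) hy
  have hs_int : Integrable (fun x => singKer (z.re - 1) x + singKer (z.re + 1) x) :=
    (singKer_integrable (z.re - 1)).add (singKer_integrable (z.re + 1))
  have hsing_int : Integrable
      (fun x => z.im⁻¹ * (singKer (z.re - 1) x + singKer (z.re + 1) x)) :=
    hs_int.const_mul _
  have hG_int : Integrable G := hc_int.add hsing_int
  have hae : ∀ᵐ x : ℝ, ‖slitDerivAt x z - 1‖ ≤ G x := by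
    filter_upwards [ae_ne_const (z.re - 1), ae_ne_const (z.re + 1)] with x hx1 hx2
    exact slit_pointwise_bound z hz x hx1 hx2
  have hmeas : Measurable fun x : ℝ => ‖slitDerivAt x z - 1‖ := by
    have m1 : Measurable fun x : ℝ => z - (x:ℂ) :=
      measurable_const.sub Complex.measurable_ofReal
    have m2 : Measurable fun x : ℝ => (z - (x:ℂ))^2 - 1 :=
      (m1.pow measurable_const).sub measurable_const
    have m3 : Measurable fun x : ℝ => csqrtH ((z - (x:ℂ))^2 - 1) :=
      measurable_csqrtH.comp m2
    exact ((m1.div m3).sub measurable_const).norm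
  have hint : Integrable (fun x : ℝ => ‖slitDerivAt x z - 1‖) := by
    apply Integrable.mono' hG_int hmeas.aestronglyMeasurable
    filter_upwards [hae] with x hx
    rwa [norm_norm]
  refine ⟨hint, ?_⟩
  have hle : ∫ x : ℝ, ‖slitDerivAt x z - 1‖ ≤ ∫ x, G x :=
    integral_mono_ae hint hG_int hae
  have hGval : ∫ x, G x ≤ 2 * Real.pi / z.im + z.im⁻¹ * 14 := by
    rw [hG, integral_add hc_int hsing_int, hc_val, MeasureTheory.integral_const_mul,
      integral_add (singKer_integrable _) (singKer_integrable _)]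
    have b1 := singKer_integral_le (z.re - 1)
    have b2 := singKer_integral_le (z.re + 1)
    have : z.im⁻¹ * ((∫ x, singKer (z.re - 1) x) + ∫ x, singKer (z.re + 1) x)
        ≤ z.im⁻¹ * 14 := by
      apply mul_le_mul_of_nonneg_left (by linarith) (by positivity)
    linarith
  have hfin : 2 * Real.pi / z.im + z.im⁻¹ * 14 < 21 / z.im := by
    have heq : 2 * Real.pi / z.im + z.im⁻¹ * 14 = (2 * Real.pi + 14) / z.im := by
      field_simp
    rw [heq]
    have h21 : 2 * Real.pi + 14 < 21 := by linarith [Real.pi_lt_d2]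
    gcongr
  calc (∫ x : ℝ, ‖slitDerivAt x z - 1‖) ≤ ∫ x, G x := hle
    _ ≤ 2 * Real.pi / z.im + z.im⁻¹ * 14 := hGval
    _ < 21 / z.im := hfin
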